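/- Semantic correctness of the expansion: Let M be a structure, v a variable assignment, A a first-order formula, and T a finite nonempty set of terms whose variables are not bound in A, such that every element of the domain of M is the value under v of some term of T. Then A is true in M under v if and only if the quantifier-free expansion A^T is true in M under v. -/

import Mathlib

namespace Herbrand

abbrev FSym := Option (ℕ ⊕ ℕ)

inductive Tm : Type where
  | var : ℕ → Tm
  | fn : FSym → List Tm → Tm

inductive Fm : Type where
  | atom : ℕ → List Tm → Fm
  | neg : Fm → Fm
  | or : Fm → Fm → Fm
  | and : Fm → Fm → Fm
  | all : ℕ → Fm → Fm
  | ex : ℕ → Fm → Fm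

mutual
  def Tm.beq : Tm → Tm → Bool
    | .var x, .var y => x == y
    | .fn f ts, .fn g us => f == g && Tm.beqList ts us
    | _, _ => false
  def Tm.beqList : List Tm → List Tm → Bool
    | [], [] => true
    | t :: ts, u :: us => Tm.beq t u && Tm.beqList ts us
    | _, _ => false
end

def Tm.height : Tm → ℕ
  | .var _ => 1
  | .fn _ ts => 1 + ts.attach.foldr (fun ⟨t, _⟩ m => max (Tm.height t) m) 0

def Tm.varsT : Tm → List ℕ
  | .var x => [x]
  | .fn _ ts => ts.attach.foldr (fun ⟨t, _⟩ l => Tm.varsT t ++ l) []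

def Tm.symsT : Tm → List (FSym × ℕ)
  | .var _ => []
  | .fn f ts => (f, ts.length) :: ts.attach.foldr (fun ⟨t, _⟩ l => Tm.symsT t ++ l) []

def Tm.substT (x : ℕ) (u : Tm) : Tm → Tm
  | .var y => if y = x then u else .var y
  | .fn f ts => .fn f (ts.attach.map fun ⟨t, _⟩ => Tm.substT x u t)

/-- A term is over the base language: no Skolem symbols, no bullet. -/
def Tm.isBaseT (t : Tm) : Prop := ∀ p ∈ t.symsT, ∃ k : ℕ, p.1 = some (Sum.inl k)

def Fm.freeVars : Fm → List ℕ
  | .atom _ ts => ts.flatMap Tm.varsT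
  | .neg A => A.freeVars
  | .or A B => A.freeVars ++ B.freeVars
  | .and A B => A.freeVars ++ B.freeVars
  | .all x A => A.freeVars.filter (· ≠ x)
  | .ex x A => A.freeVars.filter (· ≠ x)

def Fm.boundVars : Fm → List ℕ
  | .atom _ _ => []
  | .neg A => A.boundVars
  | .or A B => A.boundVars ++ B.boundVars
  | .and A B => A.boundVars ++ B.boundVars
  | .all x A => x :: A.boundVars
  | .ex x A => x :: A.boundVars

def Fm.symsF : Fm → List (FSym × ℕ)
  | .atom _ ts => ts.flatMap Tm.symsT
  | .neg A => A.symsF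
  | .or A B => A.symsF ++ B.symsF
  | .and A B => A.symsF ++ B.symsF
  | .all _ A => A.symsF
  | .ex _ A => A.symsF

/-- Naive substitution of the term `u` for the free occurrences of the variable `x`. -/
def Fm.subst (x : ℕ) (u : Tm) : Fm → Fm
  | .atom p ts => .atom p (ts.map (Tm.substT x u))
  | .neg A => .neg (Fm.subst x u A)
  | .or A B => .or (Fm.subst x u A) (Fm.subst x u B)
  | .and A B => .and (Fm.subst x u A) (Fm.subst x u B)
  | .all y A => if y = x then .all y A else .all y (Fm.subst x u A)
  | .ex y A => if y = x then .ex y A else .ex y (Fm.subst x u A)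

/-- Quantifier-freeness. -/
def Fm.qf : Fm → Prop
  | .atom _ _ => True
  | .neg A => A.qf
  | .or A B => A.qf ∧ B.qf
  | .and A B => A.qf ∧ B.qf
  | .all _ _ => False
  | .ex _ _ => False

def Fm.qfB : Fm → Bool
  | .atom _ _ => true
  | .neg A => A.qfB
  | .or A B => A.qfB && B.qfB
  | .and A B => A.qfB && B.qfB
  | .all _ _ => false
  | .ex _ _ => false

/-- A formula is over the base language. -/
def Fm.isBase (A : Fm) : Prop := ∀ p ∈ A.symsF, ∃ k : ℕ, p.1 = some (Sum.inl k)

/-- Rectified: distinct binders, and bound variables distinct from free variables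
(the tacit assumption of the paper: every occurrence of every variable is either
free or bound by a unique quantifier). -/
def Fm.rectified (A : Fm) : Prop :=
  A.boundVars.Nodup ∧ ∀ x ∈ A.boundVars, x ∉ A.freeVars

/-- Sentential (Boolean) evaluation, reading each atomic formula (a predicate symbol
together with its argument terms) as a propositional variable. -/
def Fm.sentEval (β : ℕ → List Tm → Bool) : Fm → Bool
  | .atom p ts => β p ts
  | .neg A => !(A.sentEval β)
  | .or A B => A.sentEval β || B.sentEval β
  | .and A B => A.sentEval β && B.sentEval β
  | .all _ _ => false
  | .ex _ _ => false

/-- A sentential tautology: a quantifier-free formula that evaluates to true under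
every Boolean valuation of its atoms. -/
def Fm.taut (A : Fm) : Prop := A.qf ∧ ∀ β : ℕ → List Tm → Bool, A.sentEval β = true

/-- An interpretation of the language on a domain `D`. -/
structure Interp (D : Type) where
  fns : FSym → List D → D
  prd : ℕ → List D → Prop

def Tm.eval {D : Type} (I : Interp D) (v : ℕ → D) : Tm → D
  | .var x => v x
  | .fn f ts => I.fns f (ts.attach.map fun ⟨t, _⟩ => Tm.eval I v t)

def Fm.holds {D : Type} (I : Interp D) (v : ℕ → D) : Fm → Prop
  | .atom p ts => I.prd p (ts.map (Tm.eval I v))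
  | .neg A => ¬ Fm.holds I v A
  | .or A B => Fm.holds I v A ∨ Fm.holds I v B
  | .and A B => Fm.holds I v A ∧ Fm.holds I v B
  | .all x A => ∀ d : D, Fm.holds I (Function.update v x d) A
  | .ex x A => ∃ d : D, Fm.holds I (Function.update v x d) A

/-- Validity: truth in every structure (nonempty domain) under every assignment. -/
def Fm.valid (A : Fm) : Prop :=
  ∀ (D : Type) (_ : Nonempty D) (I : Interp D) (v : ℕ → D), A.holds I v


/-- Alpha-equivalence: equality of formulas up to renaming of bound variables. -/
inductive Alpha : Fm → Fm → Prop where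
  | refl (A : Fm) : Alpha A A
  | symm {A B : Fm} : Alpha A B → Alpha B A
  | trans {A B C : Fm} : Alpha A B → Alpha B C → Alpha A C
  | negc {A B : Fm} : Alpha A B → Alpha (.neg A) (.neg B)
  | orc {A A' B B' : Fm} : Alpha A A' → Alpha B B' → Alpha (.or A B) (.or A' B')
  | andc {A A' B B' : Fm} : Alpha A A' → Alpha B B' → Alpha (.and A B) (.and A' B')
  | allc {A B : Fm} (x : ℕ) : Alpha A B → Alpha (.all x A) (.all x B)
  | exc {A B : Fm} (x : ℕ) : Alpha A B → Alpha (.ex x A) (.ex x B)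
  | allRename (x y : ℕ) (A : Fm) : y ∉ A.freeVars → y ∉ A.boundVars →
      Alpha (.all x A) (.all y (Fm.subst x (.var y) A))
  | exRename (x y : ℕ) (A : Fm) : y ∉ A.freeVars → y ∉ A.boundVars →
      Alpha (.ex x A) (.ex y (Fm.subst x (.var y) A))

/-- One-hole contexts `A[…]` in formulas. -/
inductive Ctx : Type where
  | hole : Ctx
  | negC : Ctx → Ctx
  | orL : Ctx → Fm → Ctx
  | orR : Fm → Ctx → Ctx
  | andL : Ctx → Fm → Ctx
  | andR : Fm → Ctx → Ctx
  | allC : ℕ → Ctx → Ctx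
  | exC : ℕ → Ctx → Ctx

def Ctx.fill : Ctx → Fm → Fm
  | .hole, H => H
  | .negC c, H => .neg (c.fill H)
  | .orL c B, H => .or (c.fill H) B
  | .orR B c, H => .or B (c.fill H)
  | .andL c B, H => .and (c.fill H) B
  | .andR B c, H => .and B (c.fill H)
  | .allC x c, H => .all x (c.fill H)
  | .exC x c, H => .ex x (c.fill H)

/-- `true` iff the hole is in the scope of an even number of negation symbols. -/
def Ctx.pol : Ctx → Bool
  | .hole => true
  | .negC c => !c.pol
  | .orL c _ => c.pol
  | .orR _ c => c.pol
  | .andL c _ => c.pol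
  | .andR _ c => c.pol
  | .allC _ c => c.pol
  | .exC _ c => c.pol

/-- The hole is accessible: not in the scope of any quantifier. -/
def Ctx.accessible : Ctx → Prop
  | .hole => True
  | .negC c => c.accessible
  | .orL c _ => c.accessible
  | .orR _ c => c.accessible
  | .andL c _ => c.accessible
  | .andR _ c => c.accessible
  | .allC _ _ => False
  | .exC _ _ => False

/-- Variables occurring free in the context (the hole contributing nothing). -/
def Ctx.freeVarsC : Ctx → List ℕ
  | .hole => []
  | .negC c => c.freeVarsC
  | .orL c B => c.freeVarsC ++ B.freeVars
  | .orR B c => B.freeVars ++ c.freeVarsC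
  | .andL c B => c.freeVarsC ++ B.freeVars
  | .andR B c => B.freeVars ++ c.freeVarsC
  | .allC x c => c.freeVarsC.filter (· ≠ x)
  | .exC x c => c.freeVarsC.filter (· ≠ x)

/-- `mkQ q x H` is `∃x.H` if `q = true`, and `∀x.H` if `q = false`.
A quantifier `mkQ q x` sitting in a context `c` is existentialoid iff `q = c.pol`
(i.e. `∃` under an even number of negations or `∀` under an odd number),
and universaloid iff `q = !c.pol`. -/
def mkQ (q : Bool) (x : ℕ) (H : Fm) : Fm := if q then .ex x H else .all x H

/-- Derivations in the modern version of Herbrand's modus-ponens-free calculus,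
from a start formula, recording the list of instance terms `t` used by the
applications of the generalized rule of γ-quantification. -/
inductive Deriv : Fm → Fm → List Tm → Prop where
  | refl (A : Fm) : Deriv A A []
  | gamma {B : Fm} {ts : List Tm} (c : Ctx) (q : Bool) (x : ℕ) (t : Tm) (H : Fm) :
      Deriv B (c.fill (Fm.subst x t H)) ts →
      c.accessible → q = c.pol → (∀ z ∈ t.varsT, z ∉ H.boundVars) →
      Deriv B (c.fill (mkQ q x H)) (ts ++ [t])
  | delta {B : Fm} {ts : List Tm} (c : Ctx) (q : Bool) (y : ℕ) (H : Fm) :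
      Deriv B (c.fill H) ts →
      c.accessible → q = !c.pol → y ∉ c.freeVarsC →
      Deriv B (c.fill (mkQ q y H)) ts
  | simp {B : Fm} {ts : List Tm} (c : Ctx) (H H' : Fm) :
      Deriv B (c.fill (if c.pol then Fm.or H H' else Fm.and H H')) ts →
      Alpha H H' →
      Deriv B (c.fill H) ts
  | alpha {B A A' : Fm} {ts : List Tm} : Deriv B A ts → Alpha A A' → Deriv B A' ts

/-- A single application of a generalized rule of γ- or δ-quantification. -/
inductive QStep : Fm → Fm → Prop where
  | gamma (c : Ctx) (q : Bool) (x : ℕ) (t : Tm) (H : Fm) :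
      c.accessible → q = c.pol → (∀ z ∈ t.varsT, z ∉ H.boundVars) →
      QStep (c.fill (Fm.subst x t H)) (c.fill (mkQ q x H))
  | delta (c : Ctx) (q : Bool) (y : ℕ) (H : Fm) :
      c.accessible → q = !c.pol → y ∉ c.freeVarsC →
      QStep (c.fill H) (c.fill (mkQ q y H))

/-- A single application of the generalized rule of γ-simplification:
simplification where `H` is of the form `Qy.C` with `Qy.` existentialoid. -/
inductive GSimpStep : Fm → Fm → Prop where
  | mk (c : Ctx) (y : ℕ) (C H' : Fm) :
      Alpha (mkQ c.pol y C) H' →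
      GSimpStep
        (c.fill (if c.pol then Fm.or (mkQ c.pol y C) H' else Fm.and (mkQ c.pol y C) H'))
        (c.fill (mkQ c.pol y C))


/-- The Skolem term `x*(y₁,…,yₘ)` for the removed universaloid variable `x`,
whose arguments are the variables of the existentialoid quantifiers in scope. -/
def skTm (x : ℕ) (γs : List ℕ) : Tm := .fn (some (Sum.inr x)) (γs.map Tm.var)

/-- Outer Skolemization: `b` is the polarity (`true` = an even number of negations
so far), `γs` the list of variables of the existentialoid quantifiers in whose
scope we are, in order. Universaloid quantifiers are removed and their variables
replaced by Skolem terms; existentialoid quantifiers are kept. -/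
def Fm.skolemize (b : Bool) (γs : List ℕ) : Fm → Fm
  | .atom p ts => .atom p ts
  | .neg A => .neg (A.skolemize (!b) γs)
  | .or A B => .or (A.skolemize b γs) (B.skolemize b γs)
  | .and A B => .and (A.skolemize b γs) (B.skolemize b γs)
  | .all x A => if b then Fm.subst x (skTm x γs) (A.skolemize b γs)
                else .all x (A.skolemize b (γs ++ [x]))
  | .ex x A => if b then .ex x (A.skolemize b (γs ++ [x]))
               else Fm.subst x (skTm x γs) (A.skolemize b γs)

/-- The outer Skolemized form of a formula. -/
def Fm.outerSk (A : Fm) : Fm := A.skolemize true []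

def falsum : Fm := .and (.atom 0 []) (.neg (.atom 0 []))
def verum : Fm := .or (.atom 0 []) (.neg (.atom 0 []))

def bigOr : List Fm → Fm
  | [] => falsum
  | [A] => A
  | A :: B :: rest => .or A (bigOr (B :: rest))

def bigAnd : List Fm → Fm
  | [] => verum
  | [A] => A
  | A :: B :: rest => .and A (bigAnd (B :: rest))

/-- All lists of length `k` over the given list. -/
def tuples : ℕ → List Tm → List (List Tm)
  | 0, _ => [[]]
  | k + 1, l => l.flatMap fun a => (tuples k l).map (a :: ·)

/-- The fresh constant `•` is included iff `F` contains neither constants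
nor free variables. -/
def Fm.allowBullet (F : Fm) : Bool :=
  F.freeVars.isEmpty && F.symsF.all (fun p => p.2 != 0)

/-- The champ fini `T_n(F)`: all terms of height `< n` built from the function
symbols (with their arities), constant symbols, and free variables of `F`
(with the fresh constant `•` added if `F` has neither constants nor free
variables).  `T_1(F) = ∅`. -/
def Fm.champTm (F : Fm) : ℕ → List Tm
  | 0 => []
  | 1 => []
  | n + 2 =>
      F.freeVars.map Tm.var
        ++ (if F.allowBullet then [Tm.fn none []] else [])
        ++ F.symsF.flatMap (fun p => (tuples p.2 (F.champTm (n + 1))).map (Tm.fn p.1))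

/-- The expansion `A^T` of `A` w.r.t. a finite set (list) of terms `T`. -/
def Fm.expandL (T : List Tm) : Fm → Fm
  | .atom p ts => .atom p ts
  | .neg A => .neg (A.expandL T)
  | .or A B => .or (A.expandL T) (B.expandL T)
  | .and A B => .and (A.expandL T) (B.expandL T)
  | .ex x A => bigOr (T.map fun t => Fm.subst x t (A.expandL T))
  | .all x A => bigAnd (T.map fun t => Fm.subst x t (A.expandL T))

/-- Property C of order `n` (for `n ≥ 1`): letting `F` be the outer Skolemized
form of `A`, for `n = 1` the formula `F` itself must be a sentential tautology,
and for `n > 1` the expansion `F^{T_n(F)}` must be a sentential tautology. -/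
def Fm.hasC (A : Fm) (n : ℕ) : Prop :=
  (if n = 1 then A.outerSk else Fm.expandL (A.outerSk.champTm n) A.outerSk).taut


/-- Reading every term that starts with a Skolem function symbol as an atomic
variable, via an injective coding `code` of terms into variable names. -/
def Tm.readSk (code : Tm → ℕ) : Tm → Tm
  | .var x => .var x
  | .fn (some (Sum.inr k)) ts => .var (code (.fn (some (Sum.inr k)) ts))
  | .fn (some (Sum.inl k)) ts => .fn (some (Sum.inl k)) (ts.attach.map fun ⟨t, _⟩ => Tm.readSk code t)
  | .fn none ts => .fn none (ts.attach.map fun ⟨t, _⟩ => Tm.readSk code t)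

def Fm.readSk (code : Tm → ℕ) : Fm → Fm
  | .atom p ts => .atom p (ts.map (Tm.readSk code))
  | .neg A => .neg (A.readSk code)
  | .or A B => .or (A.readSk code) (B.readSk code)
  | .and A B => .and (A.readSk code) (B.readSk code)
  | .all x A => .all x (A.readSk code)
  | .ex x A => .ex x (A.readSk code)

/-- The atoms (predicate symbol with argument terms) occurring in a formula. -/
def Fm.atoms : Fm → List (ℕ × List Tm)
  | .atom p ts => [(p, ts)]
  | .neg A => A.atoms
  | .or A B => A.atoms ++ B.atoms
  | .and A B => A.atoms ++ B.atoms
  | .all _ A => A.atoms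
  | .ex _ A => A.atoms

/-- All Boolean valuations of a finite list of atoms (all other atoms `false`). -/
def valuations : List (ℕ × List Tm) → List (ℕ → List Tm → Bool)
  | [] => [fun _ _ => false]
  | a :: rest =>
      (valuations rest).flatMap fun β =>
        [fun p ts => if p == a.1 && Tm.beqList ts a.2 then true else β p ts,
         fun p ts => if p == a.1 && Tm.beqList ts a.2 then false else β p ts]

/-- Computable check for sentential tautology. -/
def Fm.tautB (A : Fm) : Bool :=
  A.qfB && (valuations A.atoms).all fun β => A.sentEval β

/-- Computable check for Property C of order `n`. -/
def Fm.hasCB (A : Fm) (n : ℕ) : Bool :=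
  (if n = 1 then A.outerSk else Fm.expandL (A.outerSk.champTm n) A.outerSk).tautB

/-- The six rules of passage, read from left to right. -/
inductive PassEq : Fm → Fm → Prop where
  | p1 (x : ℕ) (A : Fm) : PassEq (.neg (.all x A)) (.ex x (.neg A))
  | p2 (x : ℕ) (A : Fm) : PassEq (.neg (.ex x A)) (.all x (.neg A))
  | p3 (x : ℕ) (A B : Fm) : x ∉ B.freeVars → PassEq (.or (.all x A) B) (.all x (.or A B))
  | p4 (x : ℕ) (A B : Fm) : x ∉ B.freeVars → PassEq (.or B (.all x A)) (.all x (.or B A))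
  | p5 (x : ℕ) (A B : Fm) : x ∉ B.freeVars → PassEq (.or (.ex x A) B) (.ex x (.or A B))
  | p6 (x : ℕ) (A B : Fm) : x ∉ B.freeVars → PassEq (.or B (.ex x A)) (.ex x (.or B A))

/-- A single inference step of Herbrand's historic modus-ponens-free calculus:
the shallow rules of γ- and δ-quantification (empty context), the generalized
(deep) rule of simplification, the twelve (deep) rules of passage, and renaming
of bound variables. -/
inductive HStep : Fm → Fm → Prop where
  | gammaSh (x : ℕ) (t : Tm) (H : Fm) :
      (∀ z ∈ t.varsT, z ∉ H.boundVars) →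
      HStep (Fm.subst x t H) (.ex x H)
  | deltaSh (y : ℕ) (H : Fm) :
      HStep H (.all y H)
  | simp (c : Ctx) (H H' : Fm) :
      Alpha H H' →
      HStep (c.fill (if c.pol then Fm.or H H' else Fm.and H H')) (c.fill H)
  | passage (c : Ctx) (L R : Fm) : PassEq L R → HStep (c.fill L) (c.fill R)
  | passageRev (c : Ctx) (L R : Fm) : PassEq L R → HStep (c.fill R) (c.fill L)
  | alpha (A B : Fm) : Alpha A B → HStep A B



section Aux
variable {D : Type} (I : Interp D)

theorem Tm.indOn {P : Tm → Prop} (hv : ∀ x, P (.var x))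
    (hf : ∀ f ts, (∀ t ∈ ts, P t) → P (.fn f ts)) : ∀ t, P t
  | .var x => hv x
  | .fn f ts => hf f ts (fun t ht => Tm.indOn hv hf t)
  termination_by t => sizeOf t
  decreasing_by
    have := List.sizeOf_lt_of_mem ht
    simp only [Tm.fn.sizeOf_spec]; omega

@[simp] theorem Tm.eval_fn (v : ℕ → D) (f : FSym) (ts : List Tm) :
    Tm.eval I v (.fn f ts) = I.fns f (ts.map (Tm.eval I v)) := by
  rw [Tm.eval]
  congr 1
  simp [List.map_attach_eq_pmap]

@[simp] theorem Tm.substT_fn (x : ℕ) (u : Tm) (f : FSym) (ts : List Tm) :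
    Tm.substT x u (.fn f ts) = .fn f (ts.map (Tm.substT x u)) := by
  rw [Tm.substT]
  congr 1
  simp [List.map_attach_eq_pmap]

theorem List.foldr_attach' {α β : Type*} (f : α → List β) :
    ∀ l : List α, l.attach.foldr (fun t r => f t.1 ++ r) [] = l.flatMap f
  | [] => rfl
  | a :: l => by
    simp only [List.attach_cons, List.foldr_cons, List.foldr_map, List.flatMap_cons]
    rw [← List.foldr_attach' f l]

@[simp] theorem Tm.varsT_fn (f : FSym) (ts : List Tm) :
    Tm.varsT (.fn f ts) = ts.flatMap Tm.varsT := by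
  rw [Tm.varsT]
  exact List.foldr_attach' _ ts

theorem Tm.eval_congr (v v' : ℕ → D) :
    ∀ t : Tm, (∀ z ∈ t.varsT, v z = v' z) → Tm.eval I v t = Tm.eval I v' t := by
  refine Tm.indOn (fun x h => ?_) (fun f ts ih h => ?_)
  · simp only [Tm.eval]
    exact h x (by simp [Tm.varsT])
  · simp only [Tm.eval_fn]
    congr 1
    refine List.map_congr_left fun t ht => ih t ht fun z hz => ?_
    exact h z (by simp only [Tm.varsT_fn, List.mem_flatMap]; exact ⟨t, ht, hz⟩)

theorem Tm.eval_substT (v : ℕ → D) (x : ℕ) (u : Tm) :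
    ∀ t : Tm, Tm.eval I v (Tm.substT x u t) =
      Tm.eval I (Function.update v x (Tm.eval I v u)) t := by
  refine Tm.indOn (fun y => ?_) (fun f ts ih => ?_)
  · rw [Tm.substT]
    by_cases h : y = x <;> simp [h, Tm.eval, Function.update]
  · simp only [Tm.substT_fn, Tm.eval_fn, List.map_map]
    congr 1
    exact List.map_congr_left fun t ht => ih t ht

theorem Fm.subst_qf (x : ℕ) (u : Tm) : ∀ A : Fm, A.qf → (Fm.subst x u A).qf
  | .atom _ _, _ => trivial
  | .neg A, h => Fm.subst_qf x u A h
  | .or A B, h => ⟨Fm.subst_qf x u A h.1, Fm.subst_qf x u B h.2⟩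
  | .and A B, h => ⟨Fm.subst_qf x u A h.1, Fm.subst_qf x u B h.2⟩

theorem Fm.holds_subst_qf (v : ℕ → D) (x : ℕ) (u : Tm) :
    ∀ A : Fm, A.qf →
      ((Fm.subst x u A).holds I v ↔
        A.holds I (Function.update v x (Tm.eval I v u)))
  | .atom p ts, _ => by
    simp only [Fm.subst, Fm.holds, List.map_map]
    have : List.map (Tm.eval I v ∘ Tm.substT x u) ts =
        List.map (Tm.eval I (Function.update v x (Tm.eval I v u))) ts :=
      List.map_congr_left fun t _ => Tm.eval_substT I v x u t
    rw [this]
  | .neg A, h => by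
    simp only [Fm.subst, Fm.holds, Fm.holds_subst_qf v x u A h]
  | .or A B, h => by
    simp only [Fm.subst, Fm.holds, Fm.holds_subst_qf v x u A h.1,
      Fm.holds_subst_qf v x u B h.2]
  | .and A B, h => by
    simp only [Fm.subst, Fm.holds, Fm.holds_subst_qf v x u A h.1,
      Fm.holds_subst_qf v x u B h.2]

theorem bigOr_qf : ∀ l : List Fm, (∀ A ∈ l, A.qf) → (bigOr l).qf
  | [], _ => ⟨trivial, trivial⟩
  | [A], h => h A (by simp)
  | A :: B :: rest, h =>
    ⟨h A (by simp), bigOr_qf (B :: rest) fun C hC => h C (by simp_all)⟩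

theorem bigAnd_qf : ∀ l : List Fm, (∀ A ∈ l, A.qf) → (bigAnd l).qf
  | [], _ => ⟨trivial, trivial⟩
  | [A], h => h A (by simp)
  | A :: B :: rest, h =>
    ⟨h A (by simp), bigAnd_qf (B :: rest) fun C hC => h C (by simp_all)⟩

theorem bigOr_holds (v : ℕ → D) :
    ∀ l : List Fm, ((bigOr l).holds I v ↔ ∃ A ∈ l, A.holds I v)
  | [] => by simp [bigOr, falsum, Fm.holds]
  | [A] => by simp [bigOr]
  | A :: B :: rest => by
    simp only [bigOr, Fm.holds, bigOr_holds v (B :: rest)]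
    simp

theorem bigAnd_holds (v : ℕ → D) :
    ∀ l : List Fm, ((bigAnd l).holds I v ↔ ∀ A ∈ l, A.holds I v)
  | [] => by simp [bigAnd, verum, Fm.holds]; tauto
  | [A] => by simp [bigAnd]
  | A :: B :: rest => by
    simp only [bigAnd, Fm.holds, bigAnd_holds v (B :: rest)]
    simp

theorem Fm.expandL_qf (T : List Tm) : ∀ A : Fm, (A.expandL T).qf
  | .atom _ _ => trivial
  | .neg A => Fm.expandL_qf T A
  | .or A B => ⟨Fm.expandL_qf T A, Fm.expandL_qf T B⟩
  | .and A B => ⟨Fm.expandL_qf T A, Fm.expandL_qf T B⟩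
  | .ex x A => bigOr_qf _ fun C hC => by
      obtain ⟨t, _, rfl⟩ := List.mem_map.mp hC
      exact Fm.subst_qf x t _ (Fm.expandL_qf T A)
  | .all x A => bigAnd_qf _ fun C hC => by
      obtain ⟨t, _, rfl⟩ := List.mem_map.mp hC
      exact Fm.subst_qf x t _ (Fm.expandL_qf T A)

theorem expand_main (T : List Tm) :
    ∀ (A : Fm) (v : ℕ → D),
      (∀ t ∈ T, ∀ z ∈ Tm.varsT t, z ∉ A.boundVars) →
      (∀ d : D, ∃ t ∈ T, Tm.eval I v t = d) →
      (A.holds I v ↔ (A.expandL T).holds I v) := by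
  intro A
  induction A with
  | atom p ts => intro v _ _; rfl
  | neg A ih =>
    intro v hb hc
    simp only [Fm.expandL, Fm.holds, ih v (fun t ht => hb t ht) hc]
  | or A B ihA ihB =>
    intro v hb hc
    have hbA : ∀ t ∈ T, ∀ z ∈ Tm.varsT t, z ∉ A.boundVars := fun t ht z hz h =>
      hb t ht z hz (by simp [Fm.boundVars, h])
    have hbB : ∀ t ∈ T, ∀ z ∈ Tm.varsT t, z ∉ B.boundVars := fun t ht z hz h =>
      hb t ht z hz (by simp [Fm.boundVars, h])
    simp only [Fm.expandL, Fm.holds, ihA v hbA hc, ihB v hbB hc]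
  | and A B ihA ihB =>
    intro v hb hc
    have hbA : ∀ t ∈ T, ∀ z ∈ Tm.varsT t, z ∉ A.boundVars := fun t ht z hz h =>
      hb t ht z hz (by simp [Fm.boundVars, h])
    have hbB : ∀ t ∈ T, ∀ z ∈ Tm.varsT t, z ∉ B.boundVars := fun t ht z hz h =>
      hb t ht z hz (by simp [Fm.boundVars, h])
    simp only [Fm.expandL, Fm.holds, ihA v hbA hc, ihB v hbB hc]
  | ex x A ih =>
    intro v hb hc
    have hbA : ∀ t ∈ T, ∀ z ∈ Tm.varsT t, z ∉ A.boundVars := fun t ht z hz h =>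
      hb t ht z hz (by simp [Fm.boundVars, h])
    have hx : ∀ t ∈ T, x ∉ Tm.varsT t := fun t ht h =>
      hb t ht x h (by simp [Fm.boundVars])
    have heval : ∀ t ∈ T, ∀ d : D,
        Tm.eval I (Function.update v x d) t = Tm.eval I v t := fun t ht d =>
      Tm.eval_congr I _ _ t fun z hz =>
        Function.update_of_ne (fun h => hx t ht (by rwa [h] at hz)) d v
    have hc' : ∀ d : D, ∀ e : D, ∃ t ∈ T,
        Tm.eval I (Function.update v x d) t = e := fun d e => by
      obtain ⟨t, ht, he⟩ := hc e
      exact ⟨t, ht, (heval t ht d).trans he⟩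
    have key : ∀ t ∈ T,
        (A.holds I (Function.update v x (Tm.eval I v t)) ↔
          ((Fm.subst x t (A.expandL T)).holds I v)) := fun t ht => by
      rw [Fm.holds_subst_qf I v x t _ (Fm.expandL_qf T A)]
      exact ih _ hbA (hc' _)
    simp only [Fm.expandL, Fm.holds, bigOr_holds I v, List.mem_map]
    constructor
    · rintro ⟨d, hd⟩
      obtain ⟨t, ht, rfl⟩ := hc d
      exact ⟨_, ⟨t, ht, rfl⟩, (key t ht).mp hd⟩
    · rintro ⟨_, ⟨t, ht, rfl⟩, h⟩
      exact ⟨Tm.eval I v t, (key t ht).mpr h⟩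
  | all x A ih =>
    intro v hb hc
    have hbA : ∀ t ∈ T, ∀ z ∈ Tm.varsT t, z ∉ A.boundVars := fun t ht z hz h =>
      hb t ht z hz (by simp [Fm.boundVars, h])
    have hx : ∀ t ∈ T, x ∉ Tm.varsT t := fun t ht h =>
      hb t ht x h (by simp [Fm.boundVars])
    have heval : ∀ t ∈ T, ∀ d : D,
        Tm.eval I (Function.update v x d) t = Tm.eval I v t := fun t ht d =>
      Tm.eval_congr I _ _ t fun z hz =>
        Function.update_of_ne (fun h => hx t ht (by rwa [h] at hz)) d v
    have hc' : ∀ d : D, ∀ e : D, ∃ t ∈ T,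
        Tm.eval I (Function.update v x d) t = e := fun d e => by
      obtain ⟨t, ht, he⟩ := hc e
      exact ⟨t, ht, (heval t ht d).trans he⟩
    have key : ∀ t ∈ T,
        (A.holds I (Function.update v x (Tm.eval I v t)) ↔
          ((Fm.subst x t (A.expandL T)).holds I v)) := fun t ht => by
      rw [Fm.holds_subst_qf I v x t _ (Fm.expandL_qf T A)]
      exact ih _ hbA (hc' _)
    simp only [Fm.expandL, Fm.holds, bigAnd_holds I v, List.mem_map]
    constructor
    · rintro h _ ⟨t, ht, rfl⟩
      exact (key t ht).mp (h _)
    · intro h d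
      obtain ⟨t, ht, rfl⟩ := hc d
      exact (key t ht).mpr (h _ ⟨t, ht, rfl⟩)

end Aux

/-- **Semantic correctness of the expansion.** If every element of the domain is
the value under `v` of some term of the finite nonempty list `T`, whose
variables are not bound in `A`, then `A` is true in `M` under `v` iff the
quantifier-free expansion `A^T` is. -/
theorem expansion_semantics {D : Type} (hD : Nonempty D) (I : Interp D)
    (v : ℕ → D) (A : Fm) (T : List Tm) (hne : T ≠ [])
    (hvars : ∀ t ∈ T, ∀ z ∈ Tm.varsT t, z ∉ A.boundVars)
    (hcover : ∀ d : D, ∃ t ∈ T, Tm.eval I v t = d) :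
    A.holds I v ↔ (A.expandL T).holds I v :=
  expand_main I T A v (fun t ht => hvars t ht) hcover

end Herbrand
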